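/- The set 𝒞^< of completion-time vectors of feasible normal schedules that complete jobs in a fixed linear order < is a closed convex polyhedron in ℝⁿ (it is the projection of the polyhedron defined by the linear feasibility constraints in variables (C, W, T) onto the C-coordinates). -/
import Mathlib


/-- Prepend the breakpoint `C₀ = 0` to a completion-time vector. -/
def withZero {n : ℕ} (Cv : Fin n → ℝ) : Fin (n + 1) → ℝ := Fin.cons 0 Cv

lemma withZero_cont {n : ℕ} (i : Fin (n+1)) :
    Continuous fun Cv : Fin n → ℝ => withZero Cv i := by
  induction i using Fin.cases with
  | zero => simpa [withZero] using continuous_const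
  | succ j => simpa [withZero] using continuous_apply j

lemma withZero_comb {n : ℕ} (a b : ℝ) (x y : Fin n → ℝ) (i : Fin (n+1)) :
    withZero (a • x + b • y) i = a * withZero x i + b * withZero y i := by
  induction i using Fin.cases with
  | zero => simp [withZero]
  | succ j => simp [withZero, mul_comm]

/-- the set `𝒞^<` of completion-time vectors of feasible normal schedules
completing the jobs in a fixed order (jobs renumbered so that job `j` completes `j`-th,
with processing times `p`) is a closed convex set in `ℝⁿ`: it is the projection onto the
`C`-coordinates of the polyhedron in the variables `(C, W, T)` cut out by the linear
normal-schedule feasibility constraints. -/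
theorem completion_vectors_closed_convex (n : ℕ) (α β : ℝ) (hα : α < 0) (hβ : 0 < β)
    (p : Fin n → ℝ) :
    IsClosed {Cv : Fin n → ℝ |
        (∀ i, 0 ≤ Cv i) ∧ (∀ i k : Fin n, i ≤ k → Cv i ≤ Cv k) ∧
        ∃ W T : Fin (n + 1) → Fin (n + 1) → ℝ,
          (∀ i j, 0 ≤ W i j) ∧ (∀ i j, 0 ≤ T i j ∧ T i j ≤ 1) ∧
          (∀ j, W 0 j = 0 ∧ T 0 j = 0) ∧
          (∀ (i : Fin n) (j : Fin (n + 1)), W i.castSucc j ≤ W i.succ j) ∧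
          (∀ (i : Fin (n + 1)) (j : Fin n), (j.succ : Fin (n + 1)) ≤ i → W i j.succ = p j) ∧
          (∀ i : Fin n, (∑ j : Fin n, (W i.succ j.succ - W i.castSucc j.succ))
              ≤ withZero Cv i.succ - withZero Cv i.castSucc) ∧
          (∀ i j : Fin n,
            α * (withZero Cv i.succ - withZero Cv i.castSucc)
              + (β - α) * (W i.succ j.succ - W i.castSucc j.succ)
              ≤ T i.succ j.succ - T i.castSucc j.succ)} ∧
    Convex ℝ {Cv : Fin n → ℝ |
        (∀ i, 0 ≤ Cv i) ∧ (∀ i k : Fin n, i ≤ k → Cv i ≤ Cv k) ∧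
        ∃ W T : Fin (n + 1) → Fin (n + 1) → ℝ,
          (∀ i j, 0 ≤ W i j) ∧ (∀ i j, 0 ≤ T i j ∧ T i j ≤ 1) ∧
          (∀ j, W 0 j = 0 ∧ T 0 j = 0) ∧
          (∀ (i : Fin n) (j : Fin (n + 1)), W i.castSucc j ≤ W i.succ j) ∧
          (∀ (i : Fin (n + 1)) (j : Fin n), (j.succ : Fin (n + 1)) ≤ i → W i j.succ = p j) ∧
          (∀ i : Fin n, (∑ j : Fin n, (W i.succ j.succ - W i.castSucc j.succ))
              ≤ withZero Cv i.succ - withZero Cv i.castSucc) ∧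
          (∀ i j : Fin n,
            α * (withZero Cv i.succ - withZero Cv i.castSucc)
              + (β - α) * (W i.succ j.succ - W i.castSucc j.succ)
              ≤ T i.succ j.succ - T i.castSucc j.succ)} := by
  constructor
  · classical
    set b0 : ℝ := ∑ j, |p j| with hb0def
    have hb0 : 0 ≤ b0 := Finset.sum_nonneg fun j _ => abs_nonneg _
    set K : Set ((Fin (n+1) → Fin (n+1) → ℝ) × (Fin (n+1) → Fin (n+1) → ℝ)) :=
      (Set.Icc 0 (fun _ _ => b0)) ×ˢ (Set.Icc 0 1) with hKdef
    have hK : IsCompact K := isCompact_Icc.prod isCompact_Icc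
    haveI : CompactSpace ↥K := isCompact_iff_compactSpace.mp hK
    set Q : Set (((Fin (n+1) → Fin (n+1) → ℝ) × (Fin (n+1) → Fin (n+1) → ℝ)) × (Fin n → ℝ)) :=
      {q | (∀ i, 0 ≤ q.2 i) ∧ (∀ i k : Fin n, i ≤ k → q.2 i ≤ q.2 k) ∧
        (∀ i j, 0 ≤ q.1.1 i j) ∧ (∀ i j, 0 ≤ q.1.2 i j ∧ q.1.2 i j ≤ 1) ∧
        (∀ j, q.1.1 0 j = 0 ∧ q.1.2 0 j = 0) ∧
        (∀ (i : Fin n) (j : Fin (n + 1)), q.1.1 i.castSucc j ≤ q.1.1 i.succ j) ∧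
        (∀ (i : Fin (n + 1)) (j : Fin n), (j.succ : Fin (n + 1)) ≤ i → q.1.1 i j.succ = p j) ∧
        (∀ i : Fin n, (∑ j : Fin n, (q.1.1 i.succ j.succ - q.1.1 i.castSucc j.succ))
            ≤ withZero q.2 i.succ - withZero q.2 i.castSucc) ∧
        (∀ i j : Fin n,
          α * (withZero q.2 i.succ - withZero q.2 i.castSucc)
            + (β - α) * (q.1.1 i.succ j.succ - q.1.1 i.castSucc j.succ)
            ≤ q.1.2 i.succ j.succ - q.1.2 i.castSucc j.succ)} with hQdef
    have cW : ∀ i j, Continuous fun q : ((Fin (n+1) → Fin (n+1) → ℝ) × (Fin (n+1) → Fin (n+1) → ℝ)) × (Fin n → ℝ) => q.1.1 i j :=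
      fun i j => (continuous_apply j).comp ((continuous_apply i).comp (continuous_fst.comp continuous_fst))
    have cT : ∀ i j, Continuous fun q : ((Fin (n+1) → Fin (n+1) → ℝ) × (Fin (n+1) → Fin (n+1) → ℝ)) × (Fin n → ℝ) => q.1.2 i j :=
      fun i j => (continuous_apply j).comp ((continuous_apply i).comp (continuous_snd.comp continuous_fst))
    have cC : ∀ i, Continuous fun q : ((Fin (n+1) → Fin (n+1) → ℝ) × (Fin (n+1) → Fin (n+1) → ℝ)) × (Fin n → ℝ) => q.2 i :=
      fun i => (continuous_apply i).comp continuous_snd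
    have cZ : ∀ i, Continuous fun q : ((Fin (n+1) → Fin (n+1) → ℝ) × (Fin (n+1) → Fin (n+1) → ℝ)) × (Fin n → ℝ) => withZero q.2 i :=
      fun i => (withZero_cont i).comp continuous_snd
    have hQ : IsClosed Q := by
      rw [hQdef]
      simp only [Set.setOf_and]
      refine (IsClosed.inter ?_ (IsClosed.inter ?_ (IsClosed.inter ?_ (IsClosed.inter ?_
        (IsClosed.inter ?_ (IsClosed.inter ?_ (IsClosed.inter ?_ (IsClosed.inter ?_ ?_))))))))
      · rw [Set.setOf_forall]
        exact isClosed_iInter fun i => isClosed_le continuous_const (cC i)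
      · rw [Set.setOf_forall]
        refine isClosed_iInter fun i => ?_
        rw [Set.setOf_forall]
        refine isClosed_iInter fun k => ?_
        by_cases h : i ≤ k
        · have : {q : ((Fin (n+1) → Fin (n+1) → ℝ) × (Fin (n+1) → Fin (n+1) → ℝ)) × (Fin n → ℝ) |
              i ≤ k → q.2 i ≤ q.2 k} = {q | q.2 i ≤ q.2 k} := by ext q; simp [h]
          rw [this]; exact isClosed_le (cC i) (cC k)
        · have : {q : ((Fin (n+1) → Fin (n+1) → ℝ) × (Fin (n+1) → Fin (n+1) → ℝ)) × (Fin n → ℝ) |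
              i ≤ k → q.2 i ≤ q.2 k} = Set.univ := by ext q; simp [h]
          rw [this]; exact isClosed_univ
      · rw [Set.setOf_forall]
        refine isClosed_iInter fun i => ?_
        rw [Set.setOf_forall]
        exact isClosed_iInter fun j => isClosed_le continuous_const (cW i j)
      · rw [Set.setOf_forall]
        refine isClosed_iInter fun i => ?_
        rw [Set.setOf_forall]
        refine isClosed_iInter fun j => ?_
        rw [Set.setOf_and]
        exact (isClosed_le continuous_const (cT i j)).inter (isClosed_le (cT i j) continuous_const)
      · rw [Set.setOf_forall]
        refine isClosed_iInter fun j => ?_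
        rw [Set.setOf_and]
        exact (isClosed_eq (cW 0 j) continuous_const).inter (isClosed_eq (cT 0 j) continuous_const)
      · rw [Set.setOf_forall]
        refine isClosed_iInter fun i => ?_
        rw [Set.setOf_forall]
        exact isClosed_iInter fun j => isClosed_le (cW i.castSucc j) (cW i.succ j)
      · rw [Set.setOf_forall]
        refine isClosed_iInter fun i => ?_
        rw [Set.setOf_forall]
        refine isClosed_iInter fun j => ?_
        by_cases h : (j.succ : Fin (n+1)) ≤ i
        · have : {q : ((Fin (n+1) → Fin (n+1) → ℝ) × (Fin (n+1) → Fin (n+1) → ℝ)) × (Fin n → ℝ) |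
              (j.succ : Fin (n+1)) ≤ i → q.1.1 i j.succ = p j} = {q | q.1.1 i j.succ = p j} := by
            ext q; simp [h]
          rw [this]; exact isClosed_eq (cW i j.succ) continuous_const
        · have : {q : ((Fin (n+1) → Fin (n+1) → ℝ) × (Fin (n+1) → Fin (n+1) → ℝ)) × (Fin n → ℝ) |
              (j.succ : Fin (n+1)) ≤ i → q.1.1 i j.succ = p j} = Set.univ := by ext q; simp [h]
          rw [this]; exact isClosed_univ
      · rw [Set.setOf_forall]
        refine isClosed_iInter fun i => ?_
        exact isClosed_le (continuous_finset_sum _ fun j _ => (cW i.succ j.succ).sub (cW i.castSucc j.succ))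
          ((cZ i.succ).sub (cZ i.castSucc))
      · rw [Set.setOf_forall]
        refine isClosed_iInter fun i => ?_
        rw [Set.setOf_forall]
        refine isClosed_iInter fun j => ?_
        exact isClosed_le
          ((continuous_const.mul ((cZ i.succ).sub (cZ i.castSucc))).add
            (continuous_const.mul ((cW i.succ j.succ).sub (cW i.castSucc j.succ))))
          ((cT i.succ j.succ).sub (cT i.castSucc j.succ))
    have hset : {Cv : Fin n → ℝ |
          (∀ i, 0 ≤ Cv i) ∧ (∀ i k : Fin n, i ≤ k → Cv i ≤ Cv k) ∧
          ∃ W T : Fin (n + 1) → Fin (n + 1) → ℝ,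
            (∀ i j, 0 ≤ W i j) ∧ (∀ i j, 0 ≤ T i j ∧ T i j ≤ 1) ∧
            (∀ j, W 0 j = 0 ∧ T 0 j = 0) ∧
            (∀ (i : Fin n) (j : Fin (n + 1)), W i.castSucc j ≤ W i.succ j) ∧
            (∀ (i : Fin (n + 1)) (j : Fin n), (j.succ : Fin (n + 1)) ≤ i → W i j.succ = p j) ∧
            (∀ i : Fin n, (∑ j : Fin n, (W i.succ j.succ - W i.castSucc j.succ))
                ≤ withZero Cv i.succ - withZero Cv i.castSucc) ∧
            (∀ i j : Fin n,
              α * (withZero Cv i.succ - withZero Cv i.castSucc)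
                + (β - α) * (W i.succ j.succ - W i.castSucc j.succ)
                ≤ T i.succ j.succ - T i.castSucc j.succ)}
        = Prod.snd '' ((fun z : ↥K × (Fin n → ℝ) => (z.1.1, z.2)) ⁻¹' Q) := by
      ext Cv
      constructor
      · rintro ⟨h1, h2, W, T, h3, h4, h5, h6, h7, h8, h9⟩
        set W' : Fin (n+1) → Fin (n+1) → ℝ := fun i => Fin.cons 0 (fun j' => W i j'.succ) with hW'def
        have hW'succ : ∀ i (j : Fin n), W' i j.succ = W i j.succ := by intro i j; simp [hW'def]
        have hW'0 : ∀ i, W' i 0 = 0 := by intro i; simp [hW'def]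
        have hmonoW : ∀ j, Monotone fun i => W i j :=
          fun j => Fin.monotone_iff_le_succ.mpr fun i => h6 i j
        have hub : ∀ i (j : Fin n), W i j.succ ≤ b0 := by
          intro i j
          calc W i j.succ ≤ W (Fin.last n) j.succ := hmonoW _ (Fin.le_last i)
            _ = p j := h7 (Fin.last n) j (Fin.le_last _)
            _ ≤ |p j| := le_abs_self _
            _ ≤ b0 := Finset.single_le_sum (fun j _ => abs_nonneg (p j)) (Finset.mem_univ j)
        have hmem : ((W', T) : _ × _) ∈ K := by
          refine ⟨⟨?_, ?_⟩, ?_, ?_⟩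
          · intro i j
            show (0:ℝ) ≤ W' i j
            induction j using Fin.cases with
            | zero => rw [hW'0]
            | succ j' => rw [hW'succ]; exact h3 i j'.succ
          · intro i j
            show W' i j ≤ b0
            induction j using Fin.cases with
            | zero => rw [hW'0]; exact hb0
            | succ j' => rw [hW'succ]; exact hub i j'
          · intro i j
            show (0:ℝ) ≤ T i j
            exact (h4 i j).1
          · intro i j
            show T i j ≤ (1:ℝ)
            exact (h4 i j).2
        refine ⟨⟨⟨(W', T), hmem⟩, Cv⟩, ?_, rfl⟩
        simp only [Set.mem_preimage, hQdef, Set.mem_setOf_eq]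
        refine ⟨h1, h2, ?_, h4, ?_, ?_, ?_, ?_, ?_⟩
        · intro i j
          induction j using Fin.cases with
          | zero => rw [hW'0]
          | succ j' => rw [hW'succ]; exact h3 i j'.succ
        · intro j
          refine ⟨?_, (h5 j).2⟩
          induction j using Fin.cases with
          | zero => exact hW'0 0
          | succ j' => rw [hW'succ]; exact (h5 j'.succ).1
        · intro i j
          induction j using Fin.cases with
          | zero => rw [hW'0, hW'0]
          | succ j' => rw [hW'succ, hW'succ]; exact h6 i j'.succ
        · intro i j hj; rw [hW'succ]; exact h7 i j hj
        · intro i; simp only [hW'succ]; exact h8 i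
        · intro i j; simp only [hW'succ]; exact h9 i j
      · rintro ⟨z, hz, rfl⟩
        simp only [Set.mem_preimage, hQdef, Set.mem_setOf_eq] at hz
        exact ⟨hz.1, hz.2.1, z.1.1.1, z.1.1.2, hz.2.2⟩
    rw [hset]
    exact isClosedMap_snd_of_compactSpace _
      (hQ.preimage ((continuous_subtype_val.comp continuous_fst).prodMk continuous_snd))
  · rintro x ⟨hx1, hx2, Wx, Tx, hx3, hx4, hx5, hx6, hx7, hx8, hx9⟩
      y ⟨hy1, hy2, Wy, Ty, hy3, hy4, hy5, hy6, hy7, hy8, hy9⟩ a b ha hb hab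
    have hz : ∀ i, (a • x + b • y) i = a * x i + b * y i := by
      intro i; simp [smul_eq_mul]
    have hWz : ∀ (W1 W2 : Fin (n+1) → Fin (n+1) → ℝ) i j,
        (a • W1 + b • W2) i j = a * W1 i j + b * W2 i j := by
      intro W1 W2 i j; simp [smul_eq_mul]
    refine ⟨?_, ?_, a • Wx + b • Wy, a • Tx + b • Ty, ?_, ?_, ?_, ?_, ?_, ?_, ?_⟩
    · intro i; rw [hz]
      exact add_nonneg (mul_nonneg ha (hx1 i)) (mul_nonneg hb (hy1 i))
    · intro i k hik; rw [hz, hz]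
      exact add_le_add (mul_le_mul_of_nonneg_left (hx2 i k hik) ha)
        (mul_le_mul_of_nonneg_left (hy2 i k hik) hb)
    · intro i j; rw [hWz]
      exact add_nonneg (mul_nonneg ha (hx3 i j)) (mul_nonneg hb (hy3 i j))
    · intro i j; rw [hWz]
      constructor
      · exact add_nonneg (mul_nonneg ha (hx4 i j).1) (mul_nonneg hb (hy4 i j).1)
      · calc a * Tx i j + b * Ty i j ≤ a * 1 + b * 1 :=
              add_le_add (mul_le_mul_of_nonneg_left (hx4 i j).2 ha)
                (mul_le_mul_of_nonneg_left (hy4 i j).2 hb)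
          _ = 1 := by rw [mul_one, mul_one, hab]
    · intro j
      rw [hWz, hWz, (hx5 j).1, (hy5 j).1, (hx5 j).2, (hy5 j).2]
      constructor <;> ring
    · intro i j; rw [hWz, hWz]
      exact add_le_add (mul_le_mul_of_nonneg_left (hx6 i j) ha)
        (mul_le_mul_of_nonneg_left (hy6 i j) hb)
    · intro i j hj
      rw [hWz, hx7 i j hj, hy7 i j hj, ← add_mul, hab, one_mul]
    · intro i
      have hsum : (∑ j : Fin n, ((a • Wx + b • Wy) i.succ j.succ - (a • Wx + b • Wy) i.castSucc j.succ))
          = a * (∑ j : Fin n, (Wx i.succ j.succ - Wx i.castSucc j.succ))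
            + b * (∑ j : Fin n, (Wy i.succ j.succ - Wy i.castSucc j.succ)) := by
        rw [Finset.mul_sum, Finset.mul_sum, ← Finset.sum_add_distrib]
        refine Finset.sum_congr rfl fun j _ => ?_
        rw [hWz, hWz]; ring
      rw [hsum, withZero_comb, withZero_comb]
      have := add_le_add (mul_le_mul_of_nonneg_left (hx8 i) ha)
        (mul_le_mul_of_nonneg_left (hy8 i) hb)
      linarith
    · intro i j
      rw [hWz, hWz, hWz, hWz, withZero_comb, withZero_comb]
      have h1 := mul_le_mul_of_nonneg_left (hx9 i j) ha
      have h2 := mul_le_mul_of_nonneg_left (hy9 i j) hb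
      nlinarith [h1, h2]
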